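/- If T ⊆ λ^{<ω} is a well-founded tree (downward closed set of finite sequences of ordinals < λ) with depth at least κ⁺, then for any coloring c : T → κ there is a subtree S ⊆ T of depth at least ω such that c is constant on each level S ∩ λ^n. -/

import Mathlib

open Cardinal

/-- The "proper extension" relation on a tree of finite sequences: `extRel T ν η` holds when
`η` is a proper initial segment of `ν` (both in `T`).  The rank of a node under this relation
is exactly its depth `dp_T`. -/
def extRel (T : Set (List Ordinal)) (ν η : T) : Prop :=
  (η : List Ordinal) <+: (ν : List Ordinal) ∧ (η : List Ordinal) ≠ (ν : List Ordinal)

/-- `w` is a good color word: for every `γ < κ'` there is a node of `T` of length `|w|` whose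
color word is `w` and whose rank is at least `γ`. -/
def GoodWord (T : Set (List Ordinal.{0})) (c : List Ordinal.{0} → Ordinal.{0})
    (R : T → Ordinal.{1}) (κ' : Ordinal.{1}) (w : List Ordinal.{0}) : Prop :=
  ∀ γ : Ordinal.{1}, γ < κ' → ∃ l, ∃ hl : l ∈ T, l.length = w.length ∧
    (∀ i : ℕ, ∀ h : i < w.length, c (l.take (i + 1)) = w[i]'h) ∧ γ ≤ R ⟨l, hl⟩

/-- If `T ⊆ λ^{<ω}` is a well-founded tree of depth at least `κ⁺`, then for any coloring
`c : T → κ` there is a subtree `S ⊆ T` of depth at least `ω` on each of whose levels `c` is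
constant. -/
theorem subtree_of_large_depth (κ : Cardinal.{0}) (hκ : ℵ₀ ≤ κ) (lam : Cardinal.{0})
    (T : Set (List Ordinal.{0}))
    (hTlam : ∀ l ∈ T, ∀ x ∈ l, x < lam.ord)
    (hdc : ∀ l ∈ T, ∀ l' : List Ordinal, l' <+: l → l' ∈ T)
    (hroot : [] ∈ T)
    (hwf : WellFounded (extRel T))
    (hdepth : Ordinal.lift.{1, 0} (Order.succ κ).ord ≤
      @IsWellFounded.rank _ (extRel T) ⟨hwf⟩ ⟨[], hroot⟩)
    (c : List Ordinal → Ordinal) (hc : ∀ l ∈ T, c l < κ.ord) :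
    ∃ S : Set (List Ordinal), S ⊆ T ∧
      (∀ l ∈ S, ∀ l' : List Ordinal, l' <+: l → l' ∈ S) ∧
      ∃ hS0 : [] ∈ S, ∃ hSwf : WellFounded (extRel S),
        Ordinal.omega0 ≤ @IsWellFounded.rank _ (extRel S) ⟨hSwf⟩ ⟨[], hS0⟩ ∧
        ∀ n : ℕ, ∀ l ∈ S, ∀ l' ∈ S, (l : List Ordinal).length = n → l'.length = n →
          c l = c l' := by
  classical
  set κ' : Ordinal.{1} := Ordinal.lift.{1} (Order.succ κ).ord with hκ'def
  set rk : T → Ordinal.{1} := @IsWellFounded.rank _ (extRel T) ⟨hwf⟩ with hrkdef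
  have rk_lt : ∀ a b : T, extRel T a b → rk a < rk b := fun _ _ h =>
    IsWellFounded.rank_lt_of_rel (hwf := ⟨hwf⟩) h
  have rk_succ : ∀ (a : T) (γ : Ordinal.{1}), γ < rk a →
      ∃ b : T, extRel T b a ∧ γ ≤ rk b := by
    intro a γ hγ
    rw [hrkdef, IsWellFounded.rank_eq (hwf := ⟨hwf⟩) (extRel T) a, Ordinal.lt_iSup_iff] at hγ
    obtain ⟨⟨b, hb⟩, h⟩ := hγ
    exact ⟨b, hb, Order.lt_succ_iff.mp h⟩
  have rk_mono : ∀ a b : T, (a : List Ordinal) <+: (b : List Ordinal) → rk b ≤ rk a := by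
    intro a b hab
    by_cases h : (a : List Ordinal) = (b : List Ordinal)
    · rw [Subtype.ext h]
    · exact (rk_lt b a ⟨hab, h⟩).le
  have hlimit : Order.IsSuccLimit κ' :=
    (Ordinal.isSuccLimit_lift).2 (Cardinal.isSuccLimit_ord (hκ.trans (Order.le_succ κ)))
  have good_nil : GoodWord T c rk κ' [] := by
    intro γ hγ
    exact ⟨[], hroot, rfl, by simp, le_trans hγ.le hdepth⟩
  -- the key step: a good word has a good one-step extension
  have step : ∀ w : List Ordinal.{0}, GoodWord T c rk κ' w →
      ∃ α : Ordinal.{0}, α < κ.ord ∧ GoodWord T c rk κ' (w ++ [α]) := by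
    intro w hw
    by_contra hcon
    push_neg at hcon
    have hchoice : ∀ α : {α : Ordinal.{0} // α < κ.ord}, ∃ γ : Ordinal.{1}, γ < κ' ∧
        ∀ l, ∀ hl : l ∈ T, l.length = (w ++ [α.1]).length →
          (∀ i : ℕ, ∀ h : i < (w ++ [α.1]).length,
            c (l.take (i + 1)) = (w ++ [α.1])[i]'h) → rk ⟨l, hl⟩ < γ := by
      intro α
      have h := hcon α.1 α.2
      unfold GoodWord at h
      push_neg at h
      obtain ⟨γ, hγ, h⟩ := h
      exact ⟨γ, hγ, h⟩
    choose g hg1 hg2 using hchoice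
    have hsup : (⨆ α, g α) < κ' := by
      apply Ordinal.iSup_lt_ord _ hg1
      have hcard : #({α : Ordinal.{0} // α < κ.ord}) = Cardinal.lift.{1} κ := by
        have h := Ordinal.mk_Iio_ordinal κ.ord
        rw [Cardinal.card_ord] at h
        exact h
      have hcof : κ'.cof = Cardinal.lift.{1} (Order.succ κ) := by
        rw [hκ'def, ← Ordinal.lift_cof, (Cardinal.isRegular_succ hκ).cof_eq]
      rw [hcard, hcof]
      exact Cardinal.lift_lt.2 (Order.lt_succ κ)
    obtain ⟨l, hl, hlen, hcol, hrk⟩ := hw (Order.succ (⨆ α, g α)) (hlimit.succ_lt hsup)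
    have hrk' : (⨆ α, g α) < rk ⟨l, hl⟩ := Order.succ_le_iff.mp hrk
    obtain ⟨b, hrel, hbrk⟩ := rk_succ ⟨l, hl⟩ _ hrk'
    -- b is a proper extension of l; cut it down to length w.length + 1
    have hlpre : l <+: (b : List Ordinal) := hrel.1
    have hllt : l.length < (b : List Ordinal).length := by
      rcases lt_or_eq_of_le hlpre.length_le with h | h
      · exact h
      · exact absurd (hlpre.eq_of_length h) hrel.2
    set m : List Ordinal := (b : List Ordinal).take (w.length + 1) with hmdef
    have hmpre : m <+: (b : List Ordinal) := List.take_prefix _ _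
    have hm : m ∈ T := hdc _ b.2 m hmpre
    have hmlen : m.length = w.length + 1 := by
      rw [hmdef, List.length_take]
      omega
    have hmrk : (⨆ α, g α) ≤ rk ⟨m, hm⟩ := le_trans hbrk (rk_mono ⟨m, hm⟩ b hmpre)
    set α : Ordinal.{0} := c m with hαdef
    have hα : α < κ.ord := hc m hm
    -- colors of m match w ++ [α]
    have hmcol : ∀ i : ℕ, ∀ h : i < (w ++ [α]).length,
        c (m.take (i + 1)) = (w ++ [α])[i]'h := by
      intro i h
      rw [List.length_append, List.length_singleton] at h
      rcases lt_or_eq_of_le (Nat.lt_succ_iff.mp h) with hi | hi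
      · have h1 : m.take (i + 1) = (b : List Ordinal).take (i + 1) := by
          rw [hmdef, List.take_take]
          congr 1
          omega
        obtain ⟨t, ht⟩ := hlpre
        have h2 : (b : List Ordinal).take (i + 1) = l.take (i + 1) := by
          rw [← ht, List.take_append_of_le_length]
          omega
        rw [h1, h2, hcol i hi, List.getElem_append_left hi]
      · have h1 : m.take (i + 1) = m := List.take_of_length_le (by omega)
        rw [h1]
        exact (List.getElem_concat_length (l := w) (a := α) (i := i) hi (by simpa using h)).symm
    have := hg2 ⟨α, hα⟩ m hm (by simp [hmlen]) hmcol
    have hle : g ⟨α, hα⟩ ≤ ⨆ α, g α := Ordinal.le_iSup g ⟨α, hα⟩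
    exact absurd (lt_of_le_of_lt hmrk this) (not_lt.mpr hle)
  -- build the sequence of good words by recursion
  choose F hF1 hF2 using step
  let G : ℕ → {w : List Ordinal.{0} // GoodWord T c rk κ' w} := fun n =>
    Nat.rec ⟨[], good_nil⟩ (fun _ p => ⟨p.1 ++ [F p.1 p.2], hF2 p.1 p.2⟩) n
  let f : ℕ → Ordinal.{0} := fun n => F (G n).1 (G n).2
  have hGs : ∀ n, (G (n + 1)).1 = (G n).1 ++ [f n] := fun n => rfl
  have hGlen : ∀ n, (G n).1.length = n := by
    intro n
    induction n with
    | zero => rfl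
    | succ n ih => rw [hGs n, List.length_append, List.length_singleton, ih]
  have hGget : ∀ n i, i < n → (G n).1[i]? = some (f i) := by
    intro n
    induction n with
    | zero => omega
    | succ n ih =>
      intro i hi
      rw [hGs n]
      rcases lt_or_eq_of_le (Nat.lt_succ_iff.mp hi) with h | h
      · rw [List.getElem?_append_left (by rw [hGlen]; exact h)]
        exact ih i h
      · subst h
        have h2 := List.getElem?_concat_length (l := (G i).1) (a := f i)
        rw [hGlen i] at h2
        exact h2
  -- the subtree S
  set S : Set (List Ordinal.{0}) :=
    {l | l ∈ T ∧ ∀ i : ℕ, i < l.length → c (l.take (i + 1)) = f i} with hSdef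
  have hST : S ⊆ T := fun l h => h.1
  have hSdc : ∀ l ∈ S, ∀ l' : List Ordinal, l' <+: l → l' ∈ S := by
    intro l hlS l' hpre
    refine ⟨hdc l hlS.1 l' hpre, fun i hi => ?_⟩
    obtain ⟨t, ht⟩ := hpre
    have : l'.take (i + 1) = l.take (i + 1) := by
      rw [← ht, List.take_append_of_le_length (by omega)]
    rw [this]
    exact hlS.2 i (by rw [← ht, List.length_append]; omega)
  have hS0 : [] ∈ S := ⟨hroot, by simp⟩
  have hSwf : WellFounded (extRel S) :=
    InvImage.wf (fun x : S => (⟨x.1, hST x.2⟩ : T)) hwf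
  set rkS : S → Ordinal.{1} := @IsWellFounded.rank _ (extRel S) ⟨hSwf⟩ with hrkSdef
  have rkS_lt : ∀ a b : S, extRel S a b → rkS a < rkS b := fun _ _ h =>
    IsWellFounded.rank_lt_of_rel (hwf := ⟨hSwf⟩) h
  -- S has elements of every length
  have hSlen : ∀ n : ℕ, ∃ l, l ∈ S ∧ l.length = n := by
    intro n
    obtain ⟨l, hl, hlen, hcol, -⟩ := (G n).2 0 hlimit.pos
    refine ⟨l, ⟨hl, fun i hi => ?_⟩, by rw [hlen, hGlen]⟩
    have hi' : i < (G n).1.length := by rw [hGlen]; rw [hlen, hGlen] at hi; exact hi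
    have h1 := hcol i hi'
    have h2 := hGget n i (by rw [hGlen] at hi'; exact hi')
    rw [List.getElem?_eq_getElem hi'] at h2
    rw [h1]
    exact Option.some_injective _ h2
  -- rank of a prefix in S is at least the distance to an extension in S
  have chain : ∀ d : ℕ, ∀ l ∈ S, ∀ p, ∀ hpS : p ∈ S, p <+: l →
      p.length + d = l.length → (d : Ordinal.{1}) ≤ rkS ⟨p, hpS⟩ := by
    intro d
    induction d with
    | zero => intro l hl p hpS hpre hlen; simp
    | succ d ih =>
      intro l hl p hpS hpre hlen
      set q : List Ordinal := l.take (p.length + 1) with hqdef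
      have hq_pre : q <+: l := List.take_prefix _ _
      have hqS : q ∈ S := hSdc l hl q hq_pre
      have hqlen : q.length = p.length + 1 := by
        rw [hqdef, List.length_take]; omega
      have hpq : p <+: q := by
        have h1 : p = l.take p.length := List.prefix_iff_eq_take.mp hpre
        have h2 : q.take p.length = l.take p.length := by
          rw [hqdef, List.take_take]; congr 1; omega
        rw [h1, ← h2]
        exact List.take_prefix _ _
      have hpne : p ≠ q := by
        intro h
        rw [h] at hqlen
        omega
      have h1 : rkS ⟨q, hqS⟩ < rkS ⟨p, hpS⟩ := rkS_lt ⟨q, hqS⟩ ⟨p, hpS⟩ ⟨hpq, hpne⟩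
      have h2 : (d : Ordinal.{1}) ≤ rkS ⟨q, hqS⟩ := ih l hl q hqS hq_pre (by omega)
      have h3 : (d : Ordinal.{1}) < rkS ⟨p, hpS⟩ := lt_of_le_of_lt h2 h1
      rw [Nat.cast_succ, Ordinal.add_one_eq_succ]
      exact Order.succ_le_iff.mpr h3
  have homega : Ordinal.omega0 ≤ rkS ⟨[], hS0⟩ := by
    rw [Ordinal.omega0_le]
    intro n
    obtain ⟨l, hlS, hlen⟩ := hSlen n
    exact chain n l hlS [] hS0 List.nil_prefix (by simp [hlen])
  refine ⟨S, hST, hSdc, hS0, hSwf, homega, ?_⟩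
  intro n l hlS l' hl'S hlen hlen'
  rcases n with - | m
  · rw [List.length_eq_zero_iff.mp hlen, List.length_eq_zero_iff.mp hlen']
  · have h1 : l.take (m + 1) = l := List.take_of_length_le (by omega)
    have h2 : l'.take (m + 1) = l' := List.take_of_length_le (by omega)
    have e1 := hlS.2 m (by omega)
    have e2 := hl'S.2 m (by omega)
    rw [h1] at e1
    rw [h2] at e2
    rw [e1, e2]
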